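/- Let G contain edge (a,b) and let G' = G minus (a,b). If dist_G(v,a) = dist_G(v,b), then for every vertex u, dist_{G'}(v,u) = dist_G(v,u) and spc_{G'}(v,u) = spc_G(v,u); i.e., vertex v is unaffected by the deletion. -/

import Mathlib

open SimpleGraph

/-- A shortest continuation cannot use an edge between two vertices equidistant from `v`. -/
private lemma avoid_key {V : Type*} (G : SimpleGraph V) (a b v : V)
    (heq : G.edist v a = G.edist v b) :
    ∀ {w u : V} (p : G.Walk w u), G.edist v w ≠ ⊤ →
      G.edist v w + p.length = G.edist v u → s(a, b) ∉ p.edges := by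
  intro w u p
  induction p with
  | nil => simp
  | @cons w x u h q ih =>
    intro hne hlen hmem
    have hvx : G.edist v x ≤ G.edist v w + 1 := by
      calc G.edist v x ≤ G.edist v w + G.edist w x := G.edist_triangle
        _ ≤ G.edist v w + 1 := by gcongr; exact G.edist_le h.toWalk
    have hq : G.edist v u ≤ G.edist v x + q.length := by
      calc G.edist v u ≤ G.edist v x + G.edist x u := G.edist_triangle
        _ ≤ G.edist v x + q.length := by gcongr; exact G.edist_le q
    simp only [SimpleGraph.Walk.edges_cons, List.mem_cons] at hmem
    have hlen' : G.edist v w + (q.length + 1) = G.edist v u := by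
      rw [← hlen]; push_cast [SimpleGraph.Walk.length_cons]; ring
    rcases hmem with hmem | hmem
    · have hwx : G.edist v w = G.edist v x := by
        rw [Sym2.eq, Sym2.rel_iff'] at hmem
        rcases hmem with ⟨rfl, rfl⟩ | ⟨rfl, rfl⟩
        · exact heq
        · exact heq.symm
      have hchain : G.edist v w + ((q.length : ℕ∞) + 1) ≤ G.edist v w + q.length := by
        calc G.edist v w + ((q.length : ℕ∞) + 1) = G.edist v u := hlen'
          _ ≤ G.edist v x + q.length := hq
          _ = G.edist v w + q.length := by rw [hwx]
      have h2 : ((q.length : ℕ∞) + 1) ≤ q.length :=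
        (WithTop.add_le_add_iff_left hne).mp hchain
      have h3 : (q.length : ℕ∞) < q.length + 1 :=
        ENat.lt_add_one_iff (by simp) |>.mpr le_rfl
      exact absurd h2 (not_le.mpr h3)
    · have hxne : G.edist v x ≠ ⊤ := by
        intro habs
        rw [habs, top_le_iff] at hvx
        rcases WithTop.add_eq_top.mp hvx with h' | h'
        · exact hne h'
        · exact WithTop.one_ne_top h'
      have hqlen : G.edist v x + q.length = G.edist v u := by
        refine le_antisymm ?_ hq
        calc G.edist v x + (q.length : ℕ∞) ≤ G.edist v w + 1 + q.length := by gcongr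
          _ = G.edist v u := by rw [← hlen']; ring
      exact ih hxne hqlen hmem

/-- The number of shortest paths between `v` and `u` in `G`. -/
noncomputable def spc {V : Type*} (G : SimpleGraph V) (v u : V) : ℕ :=
  {p : G.Walk v u | p.IsPath ∧ p.length = G.dist v u}.ncard

theorem stmt_9 {V : Type*} (G : SimpleGraph V) (a b : V) (hadj : G.Adj a b)
    (G' : SimpleGraph V) (hG' : G' = G.deleteEdges {s(a, b)}) (v : V)
    (heq : G.edist v a = G.edist v b) :
    ∀ u : V, G'.edist v u = G.edist v u ∧ spc G' v u = spc G v u := by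
  subst hG'
  set G' := G.deleteEdges {s(a, b)} with hG'
  have hle : G' ≤ G := G.deleteEdges_le _
  -- every shortest walk in G from v avoids s(a,b)
  have key : ∀ {u : V} (p : G.Walk v u), (p.length : ℕ∞) = G.edist v u →
      s(a, b) ∉ p.edges := by
    intro u p hp
    refine avoid_key G a b v heq p ?_ ?_
    · rw [G.edist_self]; simp
    · rw [G.edist_self, zero_add]; exact hp
  have hedist : ∀ u : V, G'.edist v u = G.edist v u := by
    intro u
    refine le_antisymm ?_ (edist_anti hle)
    by_cases hr : G.edist v u = ⊤
    · rw [hr]; exact le_top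
    · obtain ⟨p, hp⟩ := exists_walk_of_edist_ne_top hr
      have hav : ∀ e ∈ p.edges, ¬ e ∈ ({s(a,b)} : Set (Sym2 V)) := by
        intro e he hmem
        rw [Set.mem_singleton_iff] at hmem
        exact key p hp (hmem ▸ he)
      calc G'.edist v u ≤ (p.toDeleteEdges {s(a,b)} hav).length := G'.edist_le _
        _ = p.length := by simp [SimpleGraph.Walk.toDeleteEdges]
        _ = G.edist v u := hp
  intro u
  refine ⟨hedist u, ?_⟩
  have hdist : G'.dist v u = G.dist v u := by
    unfold SimpleGraph.dist
    rw [hedist u]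
  unfold spc
  set f : G'.Walk v u → G.Walk v u :=
    fun p => p.map (SimpleGraph.Hom.ofLE hle) with hf
  have hinj : Function.Injective f :=
    SimpleGraph.Walk.map_injective_of_injective (fun x y h => h) v u
  have himg : {p : G.Walk v u | p.IsPath ∧ p.length = G.dist v u} =
      f '' {p : G'.Walk v u | p.IsPath ∧ p.length = G'.dist v u} := by
    ext p
    constructor
    · rintro ⟨hpath, hplen⟩
      have hreach : G.Reachable v u := ⟨p⟩
      have hne : G.edist v u ≠ ⊤ := edist_ne_top_iff_reachable.mpr hreach
      have hplen' : (p.length : ℕ∞) = G.edist v u := by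
        rw [hplen]
        exact ENat.coe_toNat hne
      have hav : ∀ e ∈ p.edges, ¬ e ∈ ({s(a,b)} : Set (Sym2 V)) := by
        intro e he hmem
        rw [Set.mem_singleton_iff] at hmem
        exact key p hplen' (hmem ▸ he)
      refine ⟨p.toDeleteEdges {s(a,b)} hav, ⟨hpath.transfer _, ?_⟩, ?_⟩
      · rw [hdist, ← hplen]
        exact p.length_transfer ..
      · rw [hf]
        exact SimpleGraph.Walk.map_toDeleteEdges_eq _ _
    · rintro ⟨q, ⟨hqpath, hqlen⟩, rfl⟩
      refine ⟨SimpleGraph.Walk.map_isPath_of_injective (fun x y h => h) hqpath, ?_⟩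
      rw [hf]
      simp only [SimpleGraph.Walk.length_map]
      rw [hqlen, hdist]
  rw [himg, Set.ncard_image_of_injective _ hinj]
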